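/- Let q be a prime power, l ≥ 1, r = p^t a power of the characteristic p of 𝔽_q, and a_1,...,a_l ∈ 𝔽_q[T] of positive degree. Let α ∈ 𝔽_q((1/T)) be the continued fraction [a_1,...,a_l, a_1^r,...,a_l^r, a_1^{r²},..., a_l^{r²}, ...]. Then α satisfies α = (x_l·α^r + x_{l-1})/(y_l·α^r + y_{l-1}), where x_k = ⟨a_1,...,a_k⟩ and y_k = ⟨a_2,...,a_k⟩. -/

import Mathlib

def cont {R : Type*} [CommRing R] : List R → R
  | [] => 1
  | [a] => a
  | a :: b :: l => a * cont (b :: l) + cont l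

private lemma cont_nil {R : Type*} [CommRing R] : cont ([] : List R) = 1 := rfl
private lemma cont_single {R : Type*} [CommRing R] (a : R) : cont [a] = a := rfl
private lemma cont_cons {R : Type*} [CommRing R] (a b : R) (L : List R) :
    cont (a :: b :: L) = a * cont (b :: L) + cont L := rfl

private lemma cont_append {R : Type*} [CommRing R] (L : List R) (b c : R) :
    cont (L ++ [b, c]) = cont (L ++ [b]) * c + cont L := by
  have H : ∀ (n : ℕ) (L : List R), L.length ≤ n → ∀ b c : R,
      cont (L ++ [b, c]) = cont (L ++ [b]) * c + cont L := by
    intro n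
    induction n with
    | zero =>
      intro L hL b c
      have : L = [] := List.eq_nil_of_length_eq_zero (Nat.le_zero.mp hL)
      subst this
      simp [cont]
    | succ n ih =>
      intro L hL b c
      match L with
      | [] => simp [cont]
      | [a] => simp [cont]; ring
      | a :: d :: L' =>
        have h1 := ih (d :: L') (by simp at hL ⊢; omega) b c
        have h2 := ih L' (by simp at hL ⊢; omega) b c
        simp only [List.cons_append] at h1 h2 ⊢
        rw [cont_cons, cont_cons a d L', h1, h2]
        rw [cont_cons]
        ring
  exact H L.length L le_rfl b c

private lemma cont_range'_rec {R : Type*} [CommRing R] (f : ℕ → R) (s j : ℕ) :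
    cont ((List.range' s (j + 2)).map f)
      = cont ((List.range' s (j + 1)).map f) * f (s + j + 1)
        + cont ((List.range' s j).map f) := by
  have e1 : List.range' s (j + 2) = List.range' s j ++ [s + j, s + j + 1] := by
    rw [List.range'_concat, List.range'_concat, List.append_assoc]
    norm_num
    omega
  have e2 : List.range' s (j + 1) = List.range' s j ++ [s + j] := by
    rw [List.range'_concat]; norm_num
  rw [e1, e2, List.map_append, List.map_append]
  simpa using cont_append ((List.range' s j).map f) (f (s + j)) (f (s + j + 1))
theorem schmidt_hyperquadratic (Fq : Type*) [Field Fq] [Fintype Fq]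
    (p : ℕ) (hp : p.Prime) [CharP Fq p] (t : ℕ) (r : ℕ) (hr : r = p ^ t)
    (l : ℕ) (hl : 1 ≤ l)
    (a : ℕ → Polynomial Fq) (ha : ∀ i, 1 ≤ i → i ≤ l → 1 ≤ (a i).natDegree)
    (T : LaurentSeries Fq)
    (hT : T = ((PowerSeries.X : PowerSeries Fq) : LaurentSeries Fq)⁻¹)
    (α : LaurentSeries Fq) (αq : ℕ → LaurentSeries Fq) (hα1 : αq 1 = α)
    (hcf : ∀ m, 1 ≤ m →
      αq m = Polynomial.aeval T ((a ((m - 1) % l + 1)) ^ r ^ ((m - 1) / l))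
        + (αq (m + 1))⁻¹)
    (hord : ∀ m, 1 ≤ m → αq (m + 1) ≠ 0 ∧ (αq (m + 1)).order < 0)
    (x y : ℕ → LaurentSeries Fq)
    (hx : ∀ k, x k = cont (List.map (fun i => Polynomial.aeval T (a i)) (List.range' 1 k)))
    (hy0 : y 0 = 0)
    (hy : ∀ k, y (k + 1) = cont (List.map (fun i => Polynomial.aeval T (a i)) (List.range' 2 k))) :
    α = (x l * α ^ r + x (l - 1)) / (y l * α ^ r + y (l - 1)) := by
  haveI := Fact.mk hp
  haveI : CharP (LaurentSeries Fq) p := charP_of_injective_algebraMap (algebraMap Fq (LaurentSeries Fq)).injective p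
  have hl0 : 0 < l := hl
  have hr1 : 1 ≤ r := hr ▸ Nat.one_le_pow _ _ hp.pos
  -- Frobenius is additive
  have hfrob : ∀ u v : LaurentSeries Fq, (u + v) ^ r = u ^ r + v ^ r := by
    intro u v; rw [hr]; exact add_pow_char_pow u v p t
  have hne : ∀ m, 1 ≤ m → αq (m + 1) ≠ 0 := fun m hm => (hord m hm).1
  have hneg : ∀ m, 1 ≤ m → (αq (m + 1)).order < 0 := fun m hm => (hord m hm).2
  -- order of inverses
  have hinvord : ∀ u : LaurentSeries Fq, u ≠ 0 → (u⁻¹).order = -u.order := by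
    intro u hu
    have h := HahnSeries.order_mul hu (inv_ne_zero hu)
    rw [mul_inv_cancel₀ hu, HahnSeries.order_one] at h
    linarith
  have hordu : ∀ m, 1 ≤ m → ((αq (m + 1)) ^ r).order < 0 := by
    intro m hm
    rw [HahnSeries.order_pow, nsmul_eq_mul]
    have h1 := hneg m hm
    have h2 : (0 : ℤ) < (r : ℤ) := by exact_mod_cast hr1
    exact mul_neg_of_pos_of_neg h2 h1
  -- the key recursion on δ m = (αq m)^r - αq (m+l)
  have hkey2 : ∀ m, 1 ≤ m → (αq m) ^ r - αq (m + l)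
      = ((αq (m + 1)) ^ r)⁻¹ - (αq (m + 1 + l))⁻¹ := by
    intro m hm
    have h1 := hcf m hm
    have h2 := hcf (m + l) (by omega)
    have e0 : m + l - 1 = (m - 1) + l := by omega
    have e1 : (m + l - 1) % l = (m - 1) % l := by rw [e0, Nat.add_mod_right]
    have e2 : (m + l - 1) / l = (m - 1) / l + 1 := by rw [e0, Nat.add_div_right _ hl0]
    have h1r : (αq m) ^ r
        = Polynomial.aeval T ((a ((m + l - 1) % l + 1)) ^ r ^ ((m + l - 1) / l))
          + ((αq (m + 1)) ^ r)⁻¹ := by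
      rw [h1, hfrob, inv_pow, ← map_pow, ← pow_mul, e1, e2, pow_succ]
    have e3 : m + l + 1 = m + 1 + l := by omega
    rw [e3] at h2
    rw [h1r, h2]; ring
  have hkey : ∀ m, 1 ≤ m → (αq m) ^ r - αq (m + l)
      = -((αq (m + 1)) ^ r - αq (m + 1 + l)) * ((αq (m + 1)) ^ r * αq (m + 1 + l))⁻¹ := by
    intro m hm
    have hu : (αq (m + 1)) ^ r ≠ 0 := pow_ne_zero _ (hne m hm)
    have hv : αq (m + 1 + l) ≠ 0 := by
      have h := hne (m + l) (by omega)
      rwa [show m + l + 1 = m + 1 + l by omega] at h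
    rw [hkey2 m hm]
    field_simp
    ring
  -- if δ 1 ≠ 0 this forces ever-growing orders: contradiction
  have hδ0 : (αq 1) ^ r - αq (1 + l) = 0 := by
    by_contra hne0
    have hup : ∀ m, 1 ≤ m → (αq m) ^ r - αq (m + l) ≠ 0 →
        (αq (m + 1)) ^ r - αq (m + 1 + l) ≠ 0 := by
      intro m hm h0 hc
      exact h0 (by rw [hkey m hm, hc]; ring)
    have hstep : ∀ m, 1 ≤ m → (αq (m + 1)) ^ r - αq (m + 1 + l) ≠ 0 →
        ((αq (m + 1)) ^ r - αq (m + 1 + l)).order + 2 ≤ ((αq m) ^ r - αq (m + l)).order := by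
      intro m hm hd
      have hu : (αq (m + 1)) ^ r ≠ 0 := pow_ne_zero _ (hne m hm)
      have hv : αq (m + 1 + l) ≠ 0 := by
        have h := hne (m + l) (by omega)
        rwa [show m + l + 1 = m + 1 + l by omega] at h
      have hB : (αq (m + 1)) ^ r * αq (m + 1 + l) ≠ 0 := mul_ne_zero hu hv
      have houu := hordu m hm
      have hovv : (αq (m + 1 + l)).order < 0 := by
        have h := hneg (m + l) (by omega)
        rwa [show m + l + 1 = m + 1 + l by omega] at h
      rw [hkey m hm, HahnSeries.order_mul (neg_ne_zero.mpr hd) (inv_ne_zero hB),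
        HahnSeries.order_neg, hinvord _ hB, HahnSeries.order_mul hu hv]
      linarith
    have hgrow : ∀ j : ℕ, (αq (j + 1)) ^ r - αq (j + 1 + l) ≠ 0 ∧
        ((αq (j + 1)) ^ r - αq (j + 1 + l)).order + 2 * (j : ℤ)
          ≤ ((αq 1) ^ r - αq (1 + l)).order := by
      intro j
      induction j with
      | zero => exact ⟨by simpa using hne0, by simp⟩
      | succ j ih =>
        have h1 : (αq (j + 1 + 1)) ^ r - αq (j + 1 + 1 + l) ≠ 0 :=
          hup (j + 1) (by omega) ih.1
        have h2 := hstep (j + 1) (by omega) h1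
        refine ⟨by rwa [show j + 2 = j + 1 + 1 by omega], ?_⟩
        rw [show j + 1 + 1 = j + 2 from rfl] at h1 h2
        push_cast
        have := ih.2
        linarith
    -- lower bound on orders
    have hlb : ∀ j : ℕ, (αq (j + 1)) ^ r - αq (j + 1 + l) ≠ 0 →
        1 ≤ ((αq (j + 1)) ^ r - αq (j + 1 + l)).order := by
      intro j hd
      have h := hkey2 (j + 1) (by omega)
      have hu : (αq (j + 1 + 1)) ^ r ≠ 0 := pow_ne_zero _ (hne (j + 1) (by omega))
      have hv : αq (j + 1 + 1 + l) ≠ 0 := by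
        have hh := hne (j + 1 + l) (by omega)
        rwa [show j + 1 + l + 1 = j + 1 + 1 + l by omega] at hh
      have hou : 1 ≤ (((αq (j + 1 + 1)) ^ r)⁻¹).order := by
        rw [hinvord _ hu]
        have := hordu (j + 1) (by omega)
        omega
      have hov : 1 ≤ ((αq (j + 1 + 1 + l))⁻¹).order := by
        rw [hinvord _ hv]
        have hh := hneg (j + 1 + l) (by omega)
        rw [show j + 1 + l + 1 = j + 1 + 1 + l by omega] at hh
        omega
      rw [h] at hd ⊢
      rw [sub_eq_add_neg] at hd ⊢
      have hmin := HahnSeries.min_order_le_order_add hd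
      rw [HahnSeries.order_neg] at hmin
      omega
    -- contradiction
    set N : ℤ := ((αq 1) ^ r - αq (1 + l)).order with hN
    have hj := hgrow (N.toNat + 1)
    have h1 := hlb (N.toNat + 1) hj.1
    have h2 := hj.2
    have h3 : N ≤ (N.toNat : ℤ) := Int.self_le_toNat N
    have h4 : (0 : ℤ) ≤ ((N.toNat + 1 : ℕ) : ℤ) := Nat.cast_nonneg _
    push_cast at h2
    omega
  -- so αq (l+1) = α ^ r
  obtain ⟨n, rfl⟩ : ∃ n, l = n + 1 := ⟨l - 1, by omega⟩
  have hβ : αq (n + 2) = α ^ r := by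
    rw [hα1] at hδ0
    have h := sub_eq_zero.mp hδ0
    rw [show 1 + (n + 1) = n + 2 by omega] at h
    exact h.symm
  -- continuant recursions
  have hx0 : x 0 = 1 := by rw [hx]; simp [cont]
  have hx1 : x 1 = Polynomial.aeval T (a 1) := by rw [hx]; simp [cont]
  have hy1 : y 1 = 1 := by rw [hy 0]; simp [cont]
  have hxrec : ∀ j : ℕ, x (j + 2) = x (j + 1) * Polynomial.aeval T (a (j + 2)) + x j := by
    intro j
    rw [hx (j + 2), hx (j + 1), hx j]
    have h := cont_range'_rec (fun i => Polynomial.aeval T (a i)) 1 j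
    rw [show 1 + j + 1 = j + 2 by omega] at h
    exact h
  have hyrec : ∀ j : ℕ, y (j + 2) = y (j + 1) * Polynomial.aeval T (a (j + 2)) + y j := by
    intro j
    match j with
    | 0 =>
      rw [hy 1, hy 0, hy0]
      simp [cont]
    | j + 1 =>
      rw [hy (j + 2), hy (j + 1), hy j]
      have h := cont_range'_rec (fun i => Polynomial.aeval T (a i)) 2 j
      rw [show 2 + j + 1 = j + 3 by omega] at h
      exact h
  -- determinant identity
  have hdet : ∀ k : ℕ, x (k + 1) * y k - x k * y (k + 1) = (-1 : LaurentSeries Fq) ^ (k + 1) := by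
    intro k
    induction k with
    | zero => rw [hx1, hy0, hx0, hy1]; ring
    | succ k ih =>
      rw [show k + 1 + 1 = k + 2 from rfl, hxrec k, hyrec k, pow_succ]
      linear_combination (-1 : LaurentSeries Fq) * ih
  -- the fundamental relation between α and its complete quotients
  have hrel : ∀ k : ℕ, k ≤ n →
      α * (y (k + 1) * αq (k + 2) + y k) = x (k + 1) * αq (k + 2) + x k := by
    intro k
    induction k with
    | zero =>
      intro _
      have h1 := hcf 1 le_rfl
      rw [hα1] at h1
      simp only [Nat.sub_self, Nat.zero_mod, Nat.zero_div, pow_zero, pow_one, Nat.zero_add] at h1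
      have hz : αq 2 ≠ 0 := hne 1 le_rfl
      have hc : αq 2 * (αq 2)⁻¹ = 1 := mul_inv_cancel₀ hz
      rw [hx0, hx1, hy0, hy1]
      linear_combination αq 2 * h1 + hc
    | succ k ih =>
      intro hk
      have ihh := ih (by omega)
      have h2 := hcf (k + 2) (by omega)
      rw [show k + 2 - 1 = k + 1 by omega,
        Nat.mod_eq_of_lt (show k + 1 < n + 1 by omega),
        Nat.div_eq_of_lt (show k + 1 < n + 1 by omega), pow_zero, pow_one,
        show k + 1 + 1 = k + 2 from rfl, show k + 2 + 1 = k + 3 from rfl] at h2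
      have hz : αq (k + 3) ≠ 0 := by
        have h := hne (k + 2) (by omega)
        rwa [show k + 2 + 1 = k + 3 from rfl] at h
      have hc : αq (k + 3) * (αq (k + 3))⁻¹ = 1 := mul_inv_cancel₀ hz
      rw [h2] at ihh
      rw [show k + 1 + 1 = k + 2 from rfl, show k + 2 + 1 = k + 3 from rfl,
        hxrec k, hyrec k]
      linear_combination αq (k + 3) * ihh + (x (k + 1) - α * y (k + 1)) * hc
  have hD := hrel n le_rfl
  rw [show n + 2 = n + 1 + 1 from rfl] at hβ
  rw [hβ] at hD
  have hdet' := hdet n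
  simp only [show n + 1 - 1 = n by omega]
  have hDn : y (n + 1) * α ^ r + y n ≠ 0 := by
    intro h0
    have hN2 : x (n + 1) * α ^ r + x n = 0 := by
      rw [← hD, h0, mul_zero]
    have hzero : ((-1 : LaurentSeries Fq)) ^ (n + 1) = 0 := by
      rw [← hdet']
      linear_combination x (n + 1) * h0 - y (n + 1) * hN2
    exact pow_ne_zero _ (neg_ne_zero.mpr (one_ne_zero)) hzero
  rw [eq_div_iff hDn]
  linear_combination hD
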